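/- arXiv:2002.04697 — 2 statements merged into one kernel-verified Lean document; each statement's English description precedes it below -/
import Mathlib

section
/- Suppose Σ_{i=1}^n w_i ≤ M₁ and Σ_{i=1}^n Σ_{j=1}^n |Cov(V_{i,t}², V_{j,t}²)| ≤ M₃. Then limsup_{T→∞} T · E[ | (1/(T−t₀)) Σ_{t=t₀}^{T−1} Σ_{i=1}^n w_i V_{i,t+1}² − err |² ] ≤ M₁² M₃, where t₀ = t₀(T). -/
open MeasureTheory ProbabilityTheory Filter Finset
open scoped ENNReal NNReal

/-- Covariance of two real-valued random variables. -/
noncomputable def covar {Ω : Type*} [MeasurableSpace Ω] (μ : Measure Ω) (X Y : Ω → ℝ) : ℝ :=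
  ∫ ω, (X ω - ∫ ω', X ω' ∂μ) * (Y ω - ∫ ω', Y ω' ∂μ) ∂μ

lemma memℒp_two_mul {Ω : Type*} [MeasurableSpace Ω] {μ : Measure Ω} {f g : Ω → ℝ}
    (hf : MemLp f 4 μ) (hg : MemLp g 4 μ) : MemLp (fun ω => f ω * g ω) 2 μ := by
  have h := MeasureTheory.MemLp.smul (r := 2) (φ := g) (f := f) hf hg
    (hpqr := ⟨by
      have h4 : (4 : ℝ≥0∞) = 2 * 2 := by norm_num
      rw [h4, ENNReal.mul_inv (by norm_num) (by norm_num), ← two_mul,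
        ← mul_assoc, ENNReal.mul_inv_cancel (by norm_num) (by norm_num), one_mul]⟩)
  have : (g • f) = fun ω => f ω * g ω := by
    funext ω; simp [Pi.smul_apply, smul_eq_mul, mul_comm]
  rwa [this] at h

lemma integrable_mul_of_memℒp_two {Ω : Type*} [MeasurableSpace Ω] {μ : Measure Ω} {f g : Ω → ℝ}
    (hf : MemLp f 2 μ) (hg : MemLp g 2 μ) : Integrable (fun ω => f ω * g ω) μ := by
  have h := MeasureTheory.MemLp.smul (r := 1) (φ := g) (f := f) hf hg
    (hpqr := ⟨by
      rw [ENNReal.inv_two_add_inv_two]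
      norm_num⟩)
  have heq : (g • f) = fun ω => f ω * g ω := by
    funext ω; simp [Pi.smul_apply, smul_eq_mul, mul_comm]
  rw [heq] at h
  exact (memLp_one_iff_integrable).mp h

/-- Lemma 1 of the paper: under the weight bound `∑ wᵢ ≤ M₁` and the fourth-moment
covariance bound `∑ᵢ∑ⱼ |Cov(Vᵢₜ², Vⱼₜ²)| ≤ M₃`,
`limsup_T  T · E[ | (1/(T−t₀)) ∑_{t=t₀}^{T−1} ∑ᵢ wᵢ V_{i,t+1}² − err |² ] ≤ M₁² M₃`. -/
theorem statement0
    {Ω : Type*} [MeasurableSpace Ω] (μ : Measure Ω) [IsProbabilityMeasure μ]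
    (n : ℕ) (hn : 1 ≤ n) (w : Fin n → ℝ) (hw : ∀ i, 0 < w i)
    (V : ℕ → Ω → Fin n → ℝ) (hVmeas : ∀ t, Measurable (V t))
    (hV4 : ∀ t i, MemLp (fun ω => V t ω i) 4 μ)
    (hVindep : iIndepFun V μ)
    (hVid : ∀ s t, IdentDistrib (V s) (V t) μ μ)
    (hVmean : ∀ t i, (∫ ω, V t ω i ∂μ) = 0)
    (S : Matrix (Fin n) (Fin n) ℝ) (hSpd : S.PosDef)
    (hScov : ∀ t i j, covar μ (fun ω => V t ω i) (fun ω => V t ω j) = S i j)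
    (t₀ : ℕ → ℕ) (ht₀ : ∀ T, 2 ≤ T → 1 ≤ t₀ T ∧ t₀ T ≤ T - 1)
    (ht₀lim : Tendsto (fun T : ℕ => (t₀ T : ℝ) / T) atTop (nhds 0))
    (M₁ M₃ : ℝ) (hM₁ : 0 < M₁) (hM₃ : 0 < M₃)
    (hwsum : ∑ i, w i ≤ M₁)
    (hcov2 : ∀ t, ∑ i, ∑ j,
      |covar μ (fun ω => (V t ω i) ^ 2) (fun ω => (V t ω j) ^ 2)| ≤ M₃) :
    limsup (fun T : ℕ => (T : ℝ) *
      ∫ ω, |((T : ℝ) - (t₀ T : ℝ))⁻¹ *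
          (∑ t ∈ Finset.Ico (t₀ T) T, ∑ i, w i * (V (t + 1) ω i) ^ 2) -
          ∑ i, w i * S i i| ^ 2 ∂μ) atTop ≤ M₁ ^ 2 * M₃ := by
  set B : ℝ := M₁ ^ 2 * M₃ with hB
  -- squares are in L²
  have hA2 : ∀ t i, MemLp (fun ω => (V t ω i) ^ 2) 2 μ := by
    intro t i
    have := memℒp_two_mul (hV4 t i) (hV4 t i)
    simpa [pow_two] using this
  have hEsq : ∀ t i, (∫ ω, (V t ω i) ^ 2 ∂μ) = S i i := by
    intro t i
    have h := hScov t i i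
    rw [covar] at h
    simpa [hVmean t i, pow_two] using h
  -- the centered per-period terms
  set Y : ℕ → Ω → ℝ := fun t ω => ∑ i, w i * ((V (t + 1) ω i) ^ 2 - S i i) with hY
  have hf2 : ∀ t i, MemLp (fun ω => w i * ((V (t + 1) ω i) ^ 2 - S i i)) 2 μ := by
    intro t i
    exact ((hA2 (t + 1) i).sub (memLp_const (S i i))).const_mul (w i)
  have hY2 : ∀ t, MemLp (Y t) 2 μ := by
    intro t
    rw [hY]
    have h := memLp_finset_sum' (μ := μ) (p := 2) Finset.univ (fun i _ => hf2 t i)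
    convert h using 1
    funext ω
    simp
  have hYint : ∀ t, Integrable (Y t) μ := fun t => (hY2 t).integrable one_le_two
  have hYmean : ∀ t, (∫ ω, Y t ω ∂μ) = 0 := by
    intro t
    rw [hY]
    rw [integral_finset_sum _ (fun i _ => ((hf2 t i).integrable one_le_two))]
    refine Finset.sum_eq_zero fun i _ => ?_
    rw [integral_const_mul, integral_sub ((hA2 (t + 1) i).integrable one_le_two)
      (integrable_const _), hEsq (t + 1) i, integral_const]
    simp
  -- second moment bound for a single term
  have hYsq : ∀ t, (∫ ω, (Y t ω) ^ 2 ∂μ) ≤ B := by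
    intro t
    have hexp : ∀ ω, (Y t ω) ^ 2 = ∑ i, ∑ j,
        (w i * ((V (t + 1) ω i) ^ 2 - S i i)) * (w j * ((V (t + 1) ω j) ^ 2 - S j j)) := by
      intro ω
      rw [hY, pow_two, Finset.sum_mul_sum]
    have hint : ∀ i j : Fin n, Integrable (fun ω =>
        (w i * ((V (t + 1) ω i) ^ 2 - S i i)) * (w j * ((V (t + 1) ω j) ^ 2 - S j j))) μ :=
      fun i j => integrable_mul_of_memℒp_two (hf2 t i) (hf2 t j)
    have heval : ∀ i j : Fin n, (∫ ω,
        (w i * ((V (t + 1) ω i) ^ 2 - S i i)) * (w j * ((V (t + 1) ω j) ^ 2 - S j j)) ∂μ)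
        = w i * w j * covar μ (fun ω => (V (t + 1) ω i) ^ 2) (fun ω => (V (t + 1) ω j) ^ 2) := by
      intro i j
      rw [covar, hEsq (t + 1) i, hEsq (t + 1) j, ← integral_const_mul]
      congr 1; funext ω; ring
    calc (∫ ω, (Y t ω) ^ 2 ∂μ)
        = ∑ i, ∑ j, w i * w j *
            covar μ (fun ω => (V (t + 1) ω i) ^ 2) (fun ω => (V (t + 1) ω j) ^ 2) := by
          rw [show (fun ω => (Y t ω) ^ 2) = fun ω => ∑ i, ∑ j,
              (w i * ((V (t + 1) ω i) ^ 2 - S i i)) * (w j * ((V (t + 1) ω j) ^ 2 - S j j))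
            from funext hexp]
          rw [integral_finset_sum _ (fun i _ => integrable_finset_sum _ (fun j _ => hint i j))]
          exact Finset.sum_congr rfl fun i _ => by
            rw [integral_finset_sum _ (fun j _ => hint i j)]
            exact Finset.sum_congr rfl fun j _ => heval i j
      _ ≤ ∑ i, ∑ j, M₁ ^ 2 *
            |covar μ (fun ω => (V (t + 1) ω i) ^ 2) (fun ω => (V (t + 1) ω j) ^ 2)| := by
          refine Finset.sum_le_sum fun i _ => Finset.sum_le_sum fun j _ => ?_
          have hwi : w i ≤ M₁ := le_trans (Finset.single_le_sum
            (fun k _ => (hw k).le) (Finset.mem_univ i)) hwsum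
          have hwj : w j ≤ M₁ := le_trans (Finset.single_le_sum
            (fun k _ => (hw k).le) (Finset.mem_univ j)) hwsum
          calc w i * w j * covar μ _ _ ≤ w i * w j * |covar μ _ _| := by
                exact mul_le_mul_of_nonneg_left (le_abs_self _)
                  (mul_nonneg (hw i).le (hw j).le)
            _ ≤ M₁ ^ 2 * |covar μ _ _| := by
                refine mul_le_mul_of_nonneg_right ?_ (abs_nonneg _)
                rw [pow_two]
                exact mul_le_mul hwi hwj (hw j).le (lt_of_lt_of_le (hw i) hwi).le
      _ ≤ B := by
          rw [hB]
          simp_rw [← Finset.mul_sum]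
          exact mul_le_mul_of_nonneg_left (hcov2 (t + 1)) (by positivity)
  -- cross terms vanish
  have hcross : ∀ s t : ℕ, s ≠ t → (∫ ω, Y s ω * Y t ω ∂μ) = 0 := by
    intro s t hst
    have hφ : Measurable (fun v : Fin n → ℝ => ∑ i, w i * ((v i) ^ 2 - S i i)) := by
      exact Finset.measurable_sum _ fun i _ => by fun_prop
    have hindep : IndepFun (Y s) (Y t) μ := by
      have h := (hVindep.indepFun (show s + 1 ≠ t + 1 by omega)).comp hφ hφ
      exact h
    have := hindep.integral_mul_eq_mul_integral (hYint s).aestronglyMeasurable (hYint t).aestronglyMeasurable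
    rw [hYmean s, hYmean t] at this
    simpa [Pi.mul_apply] using this
  -- second moment bound for partial sums
  have hZ : ∀ m T : ℕ, (∫ ω, (∑ t ∈ Finset.Ico m T, Y t ω) ^ 2 ∂μ)
      ≤ (T - m : ℕ) * B := by
    intro m T
    have hint : ∀ p q : ℕ, Integrable (fun ω => Y p ω * Y q ω) μ :=
      fun p q => integrable_mul_of_memℒp_two (hY2 p) (hY2 q)
    have hexp : (fun ω => (∑ t ∈ Finset.Ico m T, Y t ω) ^ 2)
        = fun ω => ∑ p ∈ Finset.Ico m T, ∑ q ∈ Finset.Ico m T, Y p ω * Y q ω := by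
      funext ω; rw [pow_two, Finset.sum_mul_sum]
    rw [hexp, integral_finset_sum _ (fun p _ => integrable_finset_sum _ (fun q _ => hint p q))]
    rw [Finset.sum_congr rfl (fun p (_ : p ∈ Finset.Ico m T) =>
      integral_finset_sum _ (fun q _ => hint p q))]
    have hdiag : ∀ p ∈ Finset.Ico m T,
        (∑ q ∈ Finset.Ico m T, ∫ ω, Y p ω * Y q ω ∂μ) = ∫ ω, (Y p ω) ^ 2 ∂μ := by
      intro p hp
      rw [Finset.sum_eq_single_of_mem p hp (fun q _ hq => hcross p q (Ne.symm hq))]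
      congr 1; funext ω; rw [pow_two]
    calc (∑ p ∈ Finset.Ico m T, ∑ q ∈ Finset.Ico m T, ∫ ω, Y p ω * Y q ω ∂μ)
        = ∑ p ∈ Finset.Ico m T, ∫ ω, (Y p ω) ^ 2 ∂μ := Finset.sum_congr rfl hdiag
      _ ≤ ∑ _p ∈ Finset.Ico m T, B := Finset.sum_le_sum fun p _ => hYsq p
      _ = (T - m : ℕ) * B := by rw [Finset.sum_const, Nat.card_Ico, nsmul_eq_mul]
  -- the sequence under study
  set F : ℕ → ℝ := fun T => (T : ℝ) *
      ∫ ω, |((T : ℝ) - (t₀ T : ℝ))⁻¹ *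
          (∑ t ∈ Finset.Ico (t₀ T) T, ∑ i, w i * (V (t + 1) ω i) ^ 2) -
          ∑ i, w i * S i i| ^ 2 ∂μ with hF
  set G : ℕ → ℝ := fun T => ((T : ℝ) / ((T : ℝ) - (t₀ T : ℝ))) * B with hG
  have hFnonneg : ∀ T, 0 ≤ F T := by
    intro T
    exact mul_nonneg (Nat.cast_nonneg T)
      (integral_nonneg fun ω => by positivity)
  have hFG : ∀ᶠ T in atTop, F T ≤ G T := by
    filter_upwards [eventually_ge_atTop 2] with T hT
    set m := t₀ T with hm
    have hm1 : 1 ≤ m := (ht₀ T hT).1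
    have hmT : m ≤ T - 1 := (ht₀ T hT).2
    have hmT' : m < T := by omega
    have hc : (1 : ℕ) ≤ T - m := by omega
    have hcast : ((T : ℝ) - (m : ℝ)) = ((T - m : ℕ) : ℝ) := by
      rw [Nat.cast_sub hmT'.le]
    have hcpos : (0 : ℝ) < ((T - m : ℕ) : ℝ) := by
      exact_mod_cast hc
    -- rewrite integrand
    have hrw : ∀ ω, ((T : ℝ) - (m : ℝ))⁻¹ *
          (∑ t ∈ Finset.Ico m T, ∑ i, w i * (V (t + 1) ω i) ^ 2) -
          ∑ i, w i * S i i
        = ((T - m : ℕ) : ℝ)⁻¹ * (∑ t ∈ Finset.Ico m T, Y t ω) := by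
      intro ω
      have hYt : ∀ t, Y t ω = (∑ i, w i * (V (t + 1) ω i) ^ 2) - ∑ i, w i * S i i := by
        intro t
        rw [hY]
        rw [← Finset.sum_sub_distrib]
        exact Finset.sum_congr rfl fun i _ => by ring
      have hsum : (∑ t ∈ Finset.Ico m T, Y t ω)
          = (∑ t ∈ Finset.Ico m T, ∑ i, w i * (V (t + 1) ω i) ^ 2)
            - ((T - m : ℕ) : ℝ) * ∑ i, w i * S i i := by
        calc (∑ t ∈ Finset.Ico m T, Y t ω)
            = ∑ t ∈ Finset.Ico m T,
              ((∑ i, w i * (V (t + 1) ω i) ^ 2) - ∑ i, w i * S i i) :=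
              Finset.sum_congr rfl fun t _ => hYt t
          _ = _ := by
              rw [Finset.sum_sub_distrib, Finset.sum_const, Nat.card_Ico, nsmul_eq_mul]
      rw [hsum, hcast, mul_sub]
      rw [inv_mul_cancel_left₀ (ne_of_gt hcpos)]
    have hint : ∀ ω, |((T : ℝ) - (m : ℝ))⁻¹ *
          (∑ t ∈ Finset.Ico m T, ∑ i, w i * (V (t + 1) ω i) ^ 2) -
          ∑ i, w i * S i i| ^ 2
        = (((T - m : ℕ) : ℝ)⁻¹) ^ 2 * (∑ t ∈ Finset.Ico m T, Y t ω) ^ 2 := by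
      intro ω
      rw [sq_abs, hrw ω, mul_pow]
    have hIeq : (∫ ω, |((T : ℝ) - (m : ℝ))⁻¹ *
          (∑ t ∈ Finset.Ico m T, ∑ i, w i * (V (t + 1) ω i) ^ 2) -
          ∑ i, w i * S i i| ^ 2 ∂μ)
        = (((T - m : ℕ) : ℝ)⁻¹) ^ 2 * ∫ ω, (∑ t ∈ Finset.Ico m T, Y t ω) ^ 2 ∂μ := by
      rw [← integral_const_mul]
      exact integral_congr_ae (Eventually.of_forall fun ω => hint ω)
    have hIle : (∫ ω, |((T : ℝ) - (m : ℝ))⁻¹ *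
          (∑ t ∈ Finset.Ico m T, ∑ i, w i * (V (t + 1) ω i) ^ 2) -
          ∑ i, w i * S i i| ^ 2 ∂μ)
        ≤ (((T - m : ℕ) : ℝ)⁻¹) ^ 2 * ((T - m : ℕ) * B) := by
      rw [hIeq]
      exact mul_le_mul_of_nonneg_left (hZ m T) (by positivity)
    have : F T ≤ (T : ℝ) * ((((T - m : ℕ) : ℝ)⁻¹) ^ 2 * ((T - m : ℕ) * B)) :=
      mul_le_mul_of_nonneg_left hIle (Nat.cast_nonneg T)
    refine le_trans this (le_of_eq ?_)
    have hTm : (T : ℝ) * ((((T - m : ℕ) : ℝ)⁻¹) ^ 2 * ((T - m : ℕ) * B))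
        = ((T : ℝ) / ((T - m : ℕ) : ℝ)) * B := by
      field_simp
    show (T : ℝ) * ((((T - m : ℕ) : ℝ)⁻¹) ^ 2 * ((T - m : ℕ) * B))
        = ((T : ℝ) / ((T : ℝ) - (t₀ T : ℝ))) * B
    rw [hTm, ← hm, hcast]
  -- G tends to B
  have hGlim : Tendsto G atTop (nhds B) := by
    have h1 : Tendsto (fun T : ℕ => (1 : ℝ) - (t₀ T : ℝ) / T) atTop (nhds 1) := by
      have hc : Tendsto (fun _ : ℕ => (1 : ℝ)) atTop (nhds 1) := tendsto_const_nhds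
      simpa using hc.sub ht₀lim
    have h2 : Tendsto (fun T : ℕ => ((1 : ℝ) - (t₀ T : ℝ) / T)⁻¹ * B) atTop (nhds B) := by
      have := (h1.inv₀ one_ne_zero).mul_const B
      simpa using this
    refine h2.congr' ?_
    filter_upwards [eventually_ge_atTop 2] with T hT
    have hm1 : 1 ≤ t₀ T := (ht₀ T hT).1
    have hmT : t₀ T < T := by have := (ht₀ T hT).2; omega
    have hTpos : (0 : ℝ) < T := by positivity
    have hden : (0 : ℝ) < (T : ℝ) - (t₀ T : ℝ) := by
      have : (t₀ T : ℝ) < (T : ℝ) := by exact_mod_cast hmT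
      linarith
    rw [hG]
    congr 1
    rw [eq_div_iff (ne_of_gt hden)]
    field_simp
  -- conclude via limsup
  have hbdd : IsBoundedUnder (· ≤ ·) atTop G := hGlim.isBoundedUnder_le
  have hcobdd : IsCoboundedUnder (· ≤ ·) atTop F :=
    isCoboundedUnder_le_of_le atTop hFnonneg
  calc limsup F atTop ≤ limsup G atTop := limsup_le_limsup hFG hcobdd hbdd
    _ = B := hGlim.limsup_eq
end

section
/- Let M be a symmetric positive semidefinite real (n+m) × (n+m) matrix with block decomposition M = [[E, F],[F', G]] where the n × n block E is positive definite. Let Γ be an m × m diagonal matrix with strictly positive diagonal entries, let Φ be any n × m real matrix, let α ∈ [0,1), and let Ψ be any n × m real matrix. Then the n × n matrix E − F Ψ' − Ψ F' + Ψ G Ψ' + (1−α) Ψ Γ Ψ' + α (Ψ ⊙ Φ) Γ (Ψ ⊙ Φ)' is positive definite, where ⊙ denotes the Hadamard (entrywise) product. -/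
open Matrix

lemma diag_quad_nonneg {m : ℕ} (g : Fin m → ℝ) (hg : ∀ j, 0 < g j) (v : Fin m → ℝ) :
    0 ≤ v ⬝ᵥ (Matrix.diagonal g *ᵥ v) := by
  have h := (Matrix.posSemidef_diagonal_iff.mpr (fun j => (hg j).le)).dotProduct_mulVec_nonneg v
  simpa using h

lemma diag_quad_pos {m : ℕ} (g : Fin m → ℝ) (hg : ∀ j, 0 < g j) (v : Fin m → ℝ)
    (hv : v ≠ 0) : 0 < v ⬝ᵥ (Matrix.diagonal g *ᵥ v) := by
  have h := ((Matrix.posDef_diagonal_iff).mpr hg).dotProduct_mulVec_pos hv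
  simpa using h

/-- Positive definiteness of the ECM update of the innovation covariance of an
elastic-net-penalised VAR: if the block matrix `M = [[E, F], [F', G]]` is positive
semidefinite with `E` positive definite, `Γ` is diagonal with strictly positive diagonal,
`α ∈ [0,1)` and `Φ, Ψ` are arbitrary, then
`E − FΨ' − ΨF' + ΨGΨ' + (1−α) ΨΓΨ' + α (Ψ⊙Φ) Γ (Ψ⊙Φ)'` is positive definite. -/
theorem statement13 (n m : ℕ)
    (E : Matrix (Fin n) (Fin n) ℝ) (F : Matrix (Fin n) (Fin m) ℝ)
    (G : Matrix (Fin m) (Fin m) ℝ)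
    (hM : (Matrix.fromBlocks E F Fᵀ G).PosSemidef) (hE : E.PosDef)
    (g : Fin m → ℝ) (hg : ∀ j, 0 < g j)
    (Φ : Matrix (Fin n) (Fin m) ℝ)
    (α : ℝ) (hα0 : 0 ≤ α) (hα1 : α < 1)
    (Ψ : Matrix (Fin n) (Fin m) ℝ) :
    (E - F * Ψᵀ - Ψ * Fᵀ + Ψ * G * Ψᵀ
        + (1 - α) • (Ψ * Matrix.diagonal g * Ψᵀ)
        + α • (Matrix.hadamard Ψ Φ * Matrix.diagonal g * (Matrix.hadamard Ψ Φ)ᵀ)).PosDef := by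
  set D : Matrix (Fin m) (Fin m) ℝ := Matrix.diagonal g with hD
  set H : Matrix (Fin n) (Fin m) ℝ := Matrix.hadamard Ψ Φ with hH
  have hGh : Gᵀ = G := by
    have := (Matrix.isHermitian_fromBlocks_iff.mp hM.1).2.2.2
    simpa [Matrix.IsHermitian] using this
  have hEh : Eᵀ = E := by simpa [Matrix.IsHermitian] using hE.1
  have hDh : Dᵀ = D := Matrix.diagonal_transpose g
  rw [Matrix.posDef_iff_dotProduct_mulVec]
  constructor
  · show _ = _
    simp only [Matrix.conjTranspose_eq_transpose_of_trivial, Matrix.transpose_add,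
      Matrix.transpose_sub, Matrix.transpose_smul, Matrix.transpose_mul,
      Matrix.transpose_transpose, hEh, hGh, hDh, Matrix.mul_assoc]
    abel
  · intro x hx
    set v : Fin m → ℝ := Ψᵀ *ᵥ x with hv
    set w : Fin m → ℝ := Hᵀ *ᵥ x with hw
    have key : star x ⬝ᵥ ((E - F * Ψᵀ - Ψ * Fᵀ + Ψ * G * Ψᵀ
        + (1 - α) • (Ψ * D * Ψᵀ) + α • (H * D * Hᵀ)) *ᵥ x)
        = (Sum.elim x (-v)) ⬝ᵥ ((Matrix.fromBlocks E F Fᵀ G) *ᵥ (Sum.elim x (-v)))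
          + (1 - α) * (v ⬝ᵥ (D *ᵥ v)) + α * (w ⬝ᵥ (D *ᵥ w)) := by
      rw [Matrix.fromBlocks_mulVec]
      simp only [Sum.elim_comp_inl, Sum.elim_comp_inr, sumElim_dotProduct_sumElim,
        star_trivial]
      simp only [Matrix.add_mulVec, Matrix.sub_mulVec, Matrix.smul_mulVec,
        ← Matrix.mulVec_mulVec, dotProduct_add, dotProduct_sub,
        dotProduct_smul, Matrix.mulVec_neg, dotProduct_neg,
        neg_dotProduct, Matrix.dotProduct_mulVec (v := x),
        Matrix.dotProduct_mulVec (v := v), Matrix.dotProduct_mulVec (v := -v),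
        Matrix.mulVec_transpose]
      simp only [← Matrix.dotProduct_mulVec, ← hv, ← hw, Matrix.neg_vecMul,
        neg_dotProduct, smul_eq_mul]
      have hxΨ : x ᵥ* Ψ = v := (Matrix.mulVec_transpose Ψ x).symm
      have hxH : x ᵥ* H = w := (Matrix.mulVec_transpose H x).symm
      simp only [Matrix.dotProduct_mulVec, hxΨ, hxH]
      ring
    rw [key]
    have h1 : 0 ≤ (Sum.elim x (-v)) ⬝ᵥ ((Matrix.fromBlocks E F Fᵀ G) *ᵥ (Sum.elim x (-v))) := by
      have := hM.dotProduct_mulVec_nonneg (Sum.elim x (-v)); simpa using this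
    have h3 : 0 ≤ α * (w ⬝ᵥ (D *ᵥ w)) := mul_nonneg hα0 (diag_quad_nonneg g hg w)
    by_cases hv0 : v = 0
    · have h2 : (1 - α) * (v ⬝ᵥ (D *ᵥ v)) = 0 := by simp [hv0]
      have hEx : 0 < (Sum.elim x (-v)) ⬝ᵥ ((Matrix.fromBlocks E F Fᵀ G) *ᵥ (Sum.elim x (-v))) := by
        rw [Matrix.fromBlocks_mulVec]
        simp only [hv0, neg_zero, Sum.elim_comp_inl, Sum.elim_comp_inr,
          Matrix.mulVec_zero, add_zero, sumElim_dotProduct_sumElim,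
          zero_dotProduct, add_zero]
        have := hE.dotProduct_mulVec_pos hx
        simpa using this
      linarith
    · have h2 : 0 < (1 - α) * (v ⬝ᵥ (D *ᵥ v)) :=
        mul_pos (by linarith) (diag_quad_pos g hg v hv0)
      linarith
end
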